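/- The homogeneous quartic polynomial P = −3·x_0^2·x_1^2 − 6·x_0·x_1^3 − 4·x_1^4 + 3·x_0^3·x_2 + 6·x_0^2·x_1·x_2 − 3·x_0·x_1^2·x_2 − 2·x_1^3·x_2 + 10·x_0^2·x_2^2 + 2·x_0·x_1·x_2^2 − 21·x_1^2·x_2^2 + 23·x_0·x_2^3 + 16·x_1·x_2^3 + 11·x_2^4 is irreducible in the polynomial ring ℂ[x_0, x_1, x_2]. -/

import Mathlib

noncomputable section

section Helpers

open Polynomial

private lemma rep_deg2 (p : Polynomial ℂ) (h : p.natDegree ≤ 2) :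
    p = C (p.coeff 2) * X ^ 2 + C (p.coeff 1) * X + C (p.coeff 0) := by
  ext n
  rcases n with _ | _ | _ | n
  · simp [coeff_C]
  · simp [coeff_C, coeff_X_pow]
  · simp [coeff_C, coeff_X_pow]
  · rw [p.coeff_eq_zero_of_natDegree_lt (by omega)]
    simp [coeff_C, coeff_X_pow]

private lemma keyRoot (g : Polynomial ℂ)
    (hE : 3 * g ^ 3 + (-3 * X ^ 2 + 6 * X + 10) * g ^ 2
        + (-6 * X ^ 3 - 3 * X ^ 2 + 2 * X + 23) * g
        + (-4 * X ^ 4 - 2 * X ^ 3 - 21 * X ^ 2 + 16 * X + 11) = 0) : False := by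
  have h3C : (3 : Polynomial ℂ) = C 3 := (map_ofNat C 3).symm
  have h2 : g.natDegree ≤ 2 := by
    by_contra hcon
    push_neg at hcon
    have hE' : 3 * g ^ 3 = -((-3 * X ^ 2 + 6 * X + 10) * g ^ 2
        + (-6 * X ^ 3 - 3 * X ^ 2 + 2 * X + 23) * g
        + (-4 * X ^ 4 - 2 * X ^ 3 - 21 * X ^ 2 + 16 * X + 11)) := by
      linear_combination hE
    have hdeg3 : (3 * g ^ 3 : Polynomial ℂ).natDegree = 3 * g.natDegree := by
      rw [h3C, natDegree_C_mul (by norm_num : (3:ℂ) ≠ 0), natDegree_pow]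
    have b1 : ((-3 * X ^ 2 + 6 * X + 10 : Polynomial ℂ) * g ^ 2).natDegree
        ≤ 2 + 2 * g.natDegree :=
      natDegree_mul_le.trans (add_le_add (by compute_degree) (le_of_eq (natDegree_pow g 2)))
    have b2 : ((-6 * X ^ 3 - 3 * X ^ 2 + 2 * X + 23 : Polynomial ℂ) * g).natDegree
        ≤ 3 + g.natDegree :=
      natDegree_mul_le.trans (add_le_add (by compute_degree) le_rfl)
    have b3 : (-4 * X ^ 4 - 2 * X ^ 3 - 21 * X ^ 2 + 16 * X + 11 : Polynomial ℂ).natDegree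
        ≤ 4 := by compute_degree
    have hR : ((-3 * X ^ 2 + 6 * X + 10) * g ^ 2
        + (-6 * X ^ 3 - 3 * X ^ 2 + 2 * X + 23) * g
        + (-4 * X ^ 4 - 2 * X ^ 3 - 21 * X ^ 2 + 16 * X + 11)).natDegree
        ≤ 2 + 2 * g.natDegree := by
      refine (natDegree_add_le _ _).trans (max_le ((natDegree_add_le _ _).trans
        (max_le b1 (b2.trans (by omega)))) (b3.trans (by omega)))
    rw [hE', natDegree_neg] at hdeg3
    omega
  obtain ⟨a, b, c, hg⟩ : ∃ a b c, g = C c * X ^ 2 + C b * X + C a :=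
    ⟨g.coeff 0, g.coeff 1, g.coeff 2, rep_deg2 g h2⟩
  subst hg
  have h0 := congrArg (Polynomial.eval (0:ℂ)) hE
  have h1 := congrArg (Polynomial.eval (1:ℂ)) hE
  have hh2 := congrArg (Polynomial.eval (2:ℂ)) hE
  have h3 := congrArg (Polynomial.eval (3:ℂ)) hE
  have h4 := congrArg (Polynomial.eval (4:ℂ)) hE
  have h5 := congrArg (Polynomial.eval (5:ℂ)) hE
  have h6 := congrArg (Polynomial.eval (6:ℂ)) hE
  simp only [eval_add, eval_sub, eval_neg, eval_mul, eval_pow, eval_C, eval_X,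
    eval_ofNat, eval_zero] at h0 h1 hh2 h3 h4 h5 h6
  norm_num at h0 h1 hh2 h3 h4 h5 h6
  have h6' : c ^ 2 * (c - 1) = 0 := by
    linear_combination (1/2160 : ℂ) * h0 - (1/360 : ℂ) * h1 + (1/144 : ℂ) * hh2
      - (1/108 : ℂ) * h3 + (1/144 : ℂ) * h4 - (1/360 : ℂ) * h5 + (1/2160 : ℂ) * h6
  rcases mul_eq_zero.mp h6' with h | h
  · have hc : c = 0 := by
      exact pow_eq_zero_iff (by norm_num) |>.mp h
    subst hc
    have : (1:ℂ) = 0 := by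
      linear_combination (740281/1174628 + (5789383/14095536:ℂ) * b + (162583/587314:ℂ) * a) * h0
        + (-10261217/10571652 - (431365/503412:ℂ) * b - (245894/293657:ℂ) * a) * h1
        + (2829089/3523884 + (1507875/2349256:ℂ) * b + (1076535/1174628:ℂ) * a) * hh2
        + (-162023/503412 - (1008355/3523884:ℂ) * b - (18476/41951:ℂ) * a) * h3
        + (19316/377559 + (759415/14095536:ℂ) * b + (7631/90356:ℂ) * a) * h4
    exact one_ne_zero this
  · have hc : c = 1 := by
      have := sub_eq_zero.mp h
      exact this
    subst hc
    have : (1:ℂ) = 0 := by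
      linear_combination (-8544081613/285992831592 - (516217505/95330943864:ℂ) * b - (31123397/47665471932:ℂ) * a) * h0
        + (9719708774/35749103949 + (304481143/3666574764:ℂ) * b + (1246225985/47665471932:ℂ) * a) * h1
        + (-12973271341/47665471932 - (75578729/1222191588:ℂ) * b - (12426418/305547897:ℂ) * a) * hh2
        + (3981070802/35749103949 + (1232487415/47665471932:ℂ) * b + (853426727/47665471932:ℂ) * a) * h3
        + (-5249926621/285992831592 - (426714113/95330943864:ℂ) * b - (130008107/47665471932:ℂ) * a) * h4
    exact one_ne_zero this



private def Fc : Polynomial (MvPolynomial (Fin 2) ℂ) :=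
  Polynomial.C (3 * MvPolynomial.X 1) * Polynomial.X ^ 3
  + Polynomial.C (-3 * MvPolynomial.X 0 ^ 2 + 6 * MvPolynomial.X 0 * MvPolynomial.X 1
      + 10 * MvPolynomial.X 1 ^ 2) * Polynomial.X ^ 2
  + Polynomial.C (-6 * MvPolynomial.X 0 ^ 3 - 3 * MvPolynomial.X 0 ^ 2 * MvPolynomial.X 1
      + 2 * MvPolynomial.X 0 * MvPolynomial.X 1 ^ 2 + 23 * MvPolynomial.X 1 ^ 3) * Polynomial.X
  + Polynomial.C (-4 * MvPolynomial.X 0 ^ 4 - 2 * MvPolynomial.X 0 ^ 3 * MvPolynomial.X 1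
      - 21 * MvPolynomial.X 0 ^ 2 * MvPolynomial.X 1 ^ 2
      + 16 * MvPolynomial.X 0 * MvPolynomial.X 1 ^ 3 + 11 * MvPolynomial.X 1 ^ 4)

private lemma hFdeg : Fc.natDegree = 3 := by
  unfold Fc
  compute_degree!

private lemma hFcoeff3 : Fc.coeff 3 = 3 * MvPolynomial.X 1 := by
  unfold Fc
  simp only [coeff_add, coeff_C_mul, coeff_X_pow, coeff_X, coeff_C]
  norm_num

private lemma hFcoeff2 : Fc.coeff 2 = -3 * MvPolynomial.X 0 ^ 2
    + 6 * MvPolynomial.X 0 * MvPolynomial.X 1 + 10 * MvPolynomial.X 1 ^ 2 := by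
  unfold Fc
  simp only [coeff_add, coeff_C_mul, coeff_X_pow, coeff_X, coeff_C]
  norm_num

private lemma primeX1 : Prime (MvPolynomial.X 1 : MvPolynomial (Fin 2) ℂ) := by
  let e2 := (MvPolynomial.renameEquiv ℂ (Equiv.swap (0 : Fin 2) 1)).trans
    (MvPolynomial.finSuccEquiv ℂ 1)
  rw [← MulEquiv.prime_iff e2.toMulEquiv]
  have h : e2.toMulEquiv (MvPolynomial.X 1) = Polynomial.X := by
    show e2 (MvPolynomial.X 1) = Polynomial.X
    simp [e2, MvPolynomial.renameEquiv_apply, MvPolynomial.rename_X,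
      MvPolynomial.finSuccEquiv_X_zero]
  rw [h]
  exact Polynomial.prime_X

private lemma aux_const (a b : Polynomial (MvPolynomial (Fin 2) ℂ)) (hab : Fc = a * b)
    (hdega : a.natDegree = 0) : IsUnit a := by
  obtain ⟨r, hr⟩ := Polynomial.natDegree_eq_zero.mp hdega
  subst hr
  have h3 : (3 * MvPolynomial.X 1 : MvPolynomial (Fin 2) ℂ) = r * b.coeff 3 := by
    have := congrArg (fun q => Polynomial.coeff q 3) hab
    simpa [hFcoeff3, coeff_C_mul] using this
  have h2 : (-3 * MvPolynomial.X 0 ^ 2 + 6 * MvPolynomial.X 0 * MvPolynomial.X 1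
      + 10 * MvPolynomial.X 1 ^ 2 : MvPolynomial (Fin 2) ℂ) = r * b.coeff 2 := by
    have := congrArg (fun q => Polynomial.coeff q 2) hab
    simpa [hFcoeff2, coeff_C_mul] using this
  have h33 : (MvPolynomial.C (3⁻¹ : ℂ) * MvPolynomial.C (3 : ℂ)
      : MvPolynomial (Fin 2) ℂ) = 1 := by
    rw [← MvPolynomial.C_mul]; norm_num
  have h3A : ((3 : MvPolynomial (Fin 2) ℂ)) = MvPolynomial.C (3 : ℂ) :=
    (map_ofNat MvPolynomial.C 3).symm
  have hX : (MvPolynomial.X 1 : MvPolynomial (Fin 2) ℂ)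
      = r * (MvPolynomial.C (3⁻¹ : ℂ) * b.coeff 3) := by
    calc (MvPolynomial.X 1 : MvPolynomial (Fin 2) ℂ)
        = (MvPolynomial.C (3⁻¹ : ℂ) * MvPolynomial.C (3:ℂ)) * MvPolynomial.X 1 := by
          rw [h33, one_mul]
      _ = MvPolynomial.C (3⁻¹ : ℂ) * (3 * MvPolynomial.X 1) := by rw [h3A]; ring
      _ = MvPolynomial.C (3⁻¹ : ℂ) * (r * b.coeff 3) := by rw [h3]
      _ = r * (MvPolynomial.C (3⁻¹ : ℂ) * b.coeff 3) := by ring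
  rcases (primeX1.irreducible.isUnit_or_isUnit hX) with hu | hu
  · exact Polynomial.isUnit_C.mpr hu
  · exfalso
    obtain ⟨u, hu⟩ := hu
    have hr : r = MvPolynomial.X 1 * (↑u⁻¹ : MvPolynomial (Fin 2) ℂ) := by
      rw [hX, ← hu, mul_assoc, Units.mul_inv, mul_one]
    have hdvd : (-3 * MvPolynomial.X 0 ^ 2 + 6 * MvPolynomial.X 0 * MvPolynomial.X 1
        + 10 * MvPolynomial.X 1 ^ 2 : MvPolynomial (Fin 2) ℂ)
        = MvPolynomial.X 1 * ((↑u⁻¹ : MvPolynomial (Fin 2) ℂ) * b.coeff 2) := by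
      rw [h2, hr]; ring
    have := congrArg (fun q => MvPolynomial.aeval ![(1:ℂ), (0:ℂ)] q) hdvd
    simp at this



private def ψ : MvPolynomial (Fin 2) ℂ →+* Polynomial ℂ :=
  (MvPolynomial.aeval ![Polynomial.X, (1 : Polynomial ℂ)]).toRingHom

private lemma aux_lin (a b : Polynomial (MvPolynomial (Fin 2) ℂ)) (hab : Fc = a * b)
    (hdega : a.natDegree = 1) : False := by
  have ha0 : a ≠ 0 := fun h => by simp [h] at hdega
  have hFne : Fc ≠ 0 := fun h => by have h3 := hFdeg; rw [h] at h3; simp at h3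
  have hb0 : b ≠ 0 := fun h => by rw [h, mul_zero] at hab; exact hFne hab
  have hFlc : Fc.leadingCoeff = 3 * MvPolynomial.X 1 := by
    rw [Polynomial.leadingCoeff, hFdeg, hFcoeff3]
  have halc : a.leadingCoeff = a.coeff 1 := by rw [Polynomial.leadingCoeff, hdega]
  have hlc : a.coeff 1 * b.leadingCoeff = 3 * MvPolynomial.X 1 := by
    rw [← halc, ← Polynomial.leadingCoeff_mul, ← hab, hFlc]
  have ha : a = Polynomial.C (a.coeff 1) * Polynomial.X + Polynomial.C (a.coeff 0) :=
    Polynomial.eq_X_add_C_of_natDegree_le_one (le_of_eq hdega)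
  -- notation
  set α := ψ (a.coeff 1) with hα
  set β := ψ (b.leadingCoeff) with hβ
  have hαβ : α * β = 3 := by
    rw [hα, hβ, ← map_mul, hlc]
    simp [ψ]
  have h33 : (Polynomial.C (3⁻¹ : ℂ)) * (3 : Polynomial ℂ) = 1 := by
    rw [show (3 : Polynomial ℂ) = Polynomial.C 3 from (map_ofNat Polynomial.C 3).symm,
      ← Polynomial.C_mul]
    norm_num
  set g : Polynomial ℂ := -(Polynomial.C (3⁻¹ : ℂ) * β * ψ (a.coeff 0)) with hg
  have hroot : Polynomial.eval g (Polynomial.map ψ a) = 0 := by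
    conv_lhs => rw [ha]
    simp only [Polynomial.map_add, Polynomial.map_mul, Polynomial.map_C, Polynomial.map_X,
      Polynomial.eval_add, Polynomial.eval_mul, Polynomial.eval_C, Polynomial.eval_X]
    rw [hg]
    linear_combination (-(Polynomial.C (3⁻¹ : ℂ) * ψ (a.coeff 0))) * hαβ
      + (-(ψ (a.coeff 0))) * h33
  have hFg : Polynomial.eval g (Polynomial.map ψ Fc) = 0 := by
    rw [hab, Polynomial.map_mul, Polynomial.eval_mul, hroot, zero_mul]
  have hEg : 3 * g ^ 3 + (-3 * Polynomial.X ^ 2 + 6 * Polynomial.X + 10) * g ^ 2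
      + (-6 * Polynomial.X ^ 3 - 3 * Polynomial.X ^ 2 + 2 * Polynomial.X + 23) * g
      + (-4 * Polynomial.X ^ 4 - 2 * Polynomial.X ^ 3 - 21 * Polynomial.X ^ 2
        + 16 * Polynomial.X + 11) = 0 := by
    rw [← hFg]
    unfold Fc
    simp only [Polynomial.map_add, Polynomial.map_mul, Polynomial.map_pow, Polynomial.map_C,
      Polynomial.map_X, Polynomial.eval_add, Polynomial.eval_mul, Polynomial.eval_pow,
      Polynomial.eval_C, Polynomial.eval_X]
    simp only [ψ, AlgHom.toRingHom_eq_coe, RingHom.coe_coe, map_add, map_sub, map_mul, map_neg,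
      map_pow, map_ofNat, MvPolynomial.aeval_X, Matrix.cons_val_zero, Matrix.cons_val_one,
      Matrix.head_cons]
    ring
  exact keyRoot g hEg


end Helpers

open MvPolynomial

/-- The homogeneous quartic
`−3x₀²x₁² − 6x₀x₁³ − 4x₁⁴ + 3x₀³x₂ + 6x₀²x₁x₂ − 3x₀x₁²x₂ − 2x₁³x₂ + 10x₀²x₂²
  + 2x₀x₁x₂² − 21x₁²x₂² + 23x₀x₂³ + 16x₁x₂³ + 11x₂⁴`
(a plane model equation of `X₀(14)`) is irreducible in `ℂ[x₀, x₁, x₂]`. -/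
theorem stmt_11 :
    Irreducible (-3 * (X 0) ^ 2 * (X 1) ^ 2 - 6 * (X 0) * (X 1) ^ 3 - 4 * (X 1) ^ 4
        + 3 * (X 0) ^ 3 * (X 2) + 6 * (X 0) ^ 2 * (X 1) * (X 2)
        - 3 * (X 0) * (X 1) ^ 2 * (X 2) - 2 * (X 1) ^ 3 * (X 2)
        + 10 * (X 0) ^ 2 * (X 2) ^ 2 + 2 * (X 0) * (X 1) * (X 2) ^ 2
        - 21 * (X 1) ^ 2 * (X 2) ^ 2 + 23 * (X 0) * (X 2) ^ 3
        + 16 * (X 1) * (X 2) ^ 3 + 11 * (X 2) ^ 4 :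
      MvPolynomial (Fin 3) ℂ) := by
  have e := MvPolynomial.finSuccEquiv ℂ 2
  rw [← MulEquiv.irreducible_iff (MvPolynomial.finSuccEquiv ℂ 2).toMulEquiv]
  have hX0 : MvPolynomial.finSuccEquiv ℂ 2 (X 0) = Polynomial.X :=
    MvPolynomial.finSuccEquiv_X_zero
  have hX1 : MvPolynomial.finSuccEquiv ℂ 2 (X 1) = Polynomial.C (X 0) := by
    rw [show (1 : Fin 3) = Fin.succ 0 from rfl, MvPolynomial.finSuccEquiv_X_succ]
  have hX2 : MvPolynomial.finSuccEquiv ℂ 2 (X 2) = Polynomial.C (X 1) := by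
    rw [show (2 : Fin 3) = Fin.succ 1 from rfl, MvPolynomial.finSuccEquiv_X_succ]
  have hF : (MvPolynomial.finSuccEquiv ℂ 2).toMulEquiv
      (-3 * (X 0) ^ 2 * (X 1) ^ 2 - 6 * (X 0) * (X 1) ^ 3 - 4 * (X 1) ^ 4
        + 3 * (X 0) ^ 3 * (X 2) + 6 * (X 0) ^ 2 * (X 1) * (X 2)
        - 3 * (X 0) * (X 1) ^ 2 * (X 2) - 2 * (X 1) ^ 3 * (X 2)
        + 10 * (X 0) ^ 2 * (X 2) ^ 2 + 2 * (X 0) * (X 1) * (X 2) ^ 2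
        - 21 * (X 1) ^ 2 * (X 2) ^ 2 + 23 * (X 0) * (X 2) ^ 3
        + 16 * (X 1) * (X 2) ^ 3 + 11 * (X 2) ^ 4 : MvPolynomial (Fin 3) ℂ) = Fc := by
    show MvPolynomial.finSuccEquiv ℂ 2 _ = Fc
    unfold Fc
    simp only [map_add, map_sub, map_mul, map_neg, map_pow, map_ofNat, hX0, hX1, hX2]
    ring
  rw [hF]
  constructor
  · intro hu
    have h0 := Polynomial.natDegree_eq_zero_of_isUnit hu
    rw [hFdeg] at h0
    exact absurd h0 (by norm_num)
  · intro a b hab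
    by_contra hcon
    push_neg at hcon
    obtain ⟨hua, hub⟩ := hcon
    have hFne : Fc ≠ 0 := fun h => by have h3 := hFdeg; rw [h] at h3; simp at h3
    have ha0 : a ≠ 0 := fun h => hFne (by rw [hab, h, zero_mul])
    have hb0 : b ≠ 0 := fun h => hFne (by rw [hab, h, mul_zero])
    have hsum : a.natDegree + b.natDegree = 3 := by
      rw [← Polynomial.natDegree_mul ha0 hb0, ← hab, hFdeg]
    rcases (show a.natDegree = 0 ∨ a.natDegree = 1 ∨ b.natDegree = 1 ∨ b.natDegree = 0
        by omega) with h | h | h | h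
    · exact hua (aux_const a b hab h)
    · exact aux_lin a b hab h
    · exact aux_lin b a (by rw [hab, mul_comm]) h
    · exact hub (aux_const b a (by rw [hab, mul_comm]) h)

end
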